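/- Dissipated energy in the many-degrees-of-freedom model: Let a > 0, α > 0, k > 0, T > 0, b > 0 (b stands for hR/N). Define the partition function Z = 1 + ∫_0^∞ a·x^α·exp(−(b/(kT))·x) dx and the thermal energy E = Z⁻¹ · ∫_0^∞ a·x^{α+1}·b·exp(−(b/(kT))·x) dx. Then Z = 1 + a·Γ(α+1)·(kT/b)^{α+1} and E = (α+1)·k·T·(1 − 1/Z); that is, writing ε = 1 − 1/Z for the error probability, E = (α+1)·k·T·ε. -/

import Mathlib

open MeasureTheory Set Real

/-- Dissipated energy in the many-degrees-of-freedom model: with level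
density `w(x) = a·x^α` and `b = hR/N`, the partition function is
`Z = 1 + a·Γ(α+1)·(kT/b)^{α+1}` and the thermal energy is
`E = (α+1)·k·T·(1 − 1/Z) = (α+1)·k·T·ε`. -/
theorem many_degrees_of_freedom_dissipation
    (a α k T b : ℝ) (ha : 0 < a) (hα : 0 < α) (hk : 0 < k)
    (hT : 0 < T) (hb : 0 < b)
    (Z E ε : ℝ)
    (hZ : Z = 1 + ∫ x in Ioi (0:ℝ), a * x ^ α * Real.exp (-(b / (k * T)) * x))
    (hE : E = Z⁻¹ * ∫ x in Ioi (0:ℝ),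
      a * x ^ (α + 1) * b * Real.exp (-(b / (k * T)) * x))
    (hε : ε = 1 - 1 / Z) :
    Z = 1 + a * Real.Gamma (α + 1) * (k * T / b) ^ (α + 1) ∧
    E = (α + 1) * k * T * (1 - 1 / Z) ∧
    E = (α + 1) * k * T * ε := by
  have hc : 0 < b / (k * T) := by positivity
  have hinv : (1 / (b / (k * T))) = k * T / b := by
    rw [one_div_div]
  have h1 : (∫ x in Ioi (0:ℝ), a * x ^ α * Real.exp (-(b / (k * T)) * x))
      = a * ((k * T / b) ^ (α + 1) * Real.Gamma (α + 1)) := by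
    rw [← hinv, ← integral_rpow_mul_exp_neg_mul_Ioi (show (0:ℝ) < α + 1 by linarith) hc,
      ← integral_const_mul]
    apply setIntegral_congr_fun measurableSet_Ioi
    intro x hx
    simp only [add_sub_cancel_right, neg_mul]
    ring
  have h2 : (∫ x in Ioi (0:ℝ), a * x ^ (α + 1) * b * Real.exp (-(b / (k * T)) * x))
      = a * b * ((k * T / b) ^ (α + 2) * Real.Gamma (α + 2)) := by
    rw [← hinv, ← integral_rpow_mul_exp_neg_mul_Ioi (show (0:ℝ) < α + 2 by linarith) hc,
      ← integral_const_mul]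
    apply setIntegral_congr_fun measurableSet_Ioi
    intro x hx
    simp only [show α + 2 - 1 = α + 1 by ring, neg_mul]
    ring
  have hZval : Z = 1 + a * Real.Gamma (α + 1) * (k * T / b) ^ (α + 1) := by
    rw [hZ, h1]; ring
  have hGpos : 0 < Real.Gamma (α + 1) := Real.Gamma_pos_of_pos (by linarith)
  have hZpos : 0 < Z := by
    rw [hZval]; positivity
  have hZne : Z ≠ 0 := ne_of_gt hZpos
  have hGamma2 : Real.Gamma (α + 2) = (α + 1) * Real.Gamma (α + 1) := by
    have := Real.Gamma_add_one (show α + 1 ≠ 0 by positivity)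
    rw [show α + 2 = α + 1 + 1 by ring, this]
  have hpow : (k * T / b) ^ (α + 2) = (k * T / b) ^ (α + 1) * (k * T / b) := by
    rw [show α + 2 = (α + 1) + 1 by ring,
      Real.rpow_add (by positivity) (α + 1) 1, Real.rpow_one]
  have hEval : E = (α + 1) * k * T * (1 - 1 / Z) := by
    rw [hE, h2, hGamma2, hpow]
    have hZm1 : a * Real.Gamma (α + 1) * (k * T / b) ^ (α + 1) = Z - 1 := by
      rw [hZval]; ring
    field_simp
    linear_combination hZm1
  exact ⟨hZval, hEval, by rw [hε]; exact hEval⟩
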